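/- arXiv:1812.02416 — 4 statements merged into one kernel-verified Lean document; each statement's English description precedes it below -/
import Mathlib

section
/- Let γ be a probability (or more generally bounded nonnegative) measure on a measurable space, let g ≥ 0 be a measurable function, and define u(g,ε) = ∫₀^∞ (s+1)^{-2} γ(g ≤ εs) ds. Then for every r ≥ 1 and ε > 0, ∫ (g+ε)^{-r} dγ ≤ r ε^{-r} u(g,ε). -/
open MeasureTheory Real
noncomputable section

/-- Euclidean space ℝ^k. -/
abbrev Ek (k : ℕ) := EuclideanSpace ℝ (Fin k)

/-- Integral of a function against a finite signed measure (via Jordan decomposition). -/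
def sInt {E : Type*} [MeasurableSpace E] (μ : SignedMeasure E) (φ : E → ℝ) : ℝ :=
  ∫ x, φ x ∂μ.toJordanDecomposition.posPart - ∫ x, φ x ∂μ.toJordanDecomposition.negPart

/-- Shift of a signed measure: (shiftSM μ h) A = μ (A - h). -/
def shiftSM {E : Type*} [MeasurableSpace E] [Add E] (μ : SignedMeasure E) (h : E) :
    SignedMeasure E := μ.map (· + h)

/-- The modulus σ(μ,t) for a signed measure on ℝ^k (Definition 2.1). -/
def sigmaSM {k : ℕ} (μ : SignedMeasure (Ek k)) (t : ℝ) : ℝ :=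
  sSup {r | ∃ (φ : Ek k → ℝ) (e : Ek k), ContDiff ℝ (⊤ : ℕ∞) φ ∧ HasCompactSupport φ ∧
    ‖e‖ = 1 ∧ (∀ x, |φ x| ≤ t) ∧ (∀ x, |fderiv ℝ φ x e| ≤ 1) ∧
    r = sInt μ (fun x => fderiv ℝ φ x e)}

/-- Total variation norm of a signed measure, as a supremum over smooth test functions. -/
def tvSM {k : ℕ} (μ : SignedMeasure (Ek k)) : ℝ :=
  sSup {r | ∃ φ : Ek k → ℝ, ContDiff ℝ (⊤ : ℕ∞) φ ∧ HasCompactSupport φ ∧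
    (∀ x, |φ x| ≤ 1) ∧ r = sInt μ φ}

/-- Total variation distance between two (finite) measures, sup over smooth test functions. -/
def tvDist {E : Type*} [MeasurableSpace E] [NormedAddCommGroup E] [InnerProductSpace ℝ E]
    (μ ν : Measure E) : ℝ :=
  sSup {r | ∃ φ : E → ℝ, ContDiff ℝ (⊤ : ℕ∞) φ ∧ HasCompactSupport φ ∧
    (∀ x, |φ x| ≤ 1) ∧ r = ∫ x, φ x ∂μ - ∫ x, φ x ∂ν}

/-- Kantorovich–Rubinstein distance between two measures. -/
def krDist {E : Type*} [MeasurableSpace E] [NormedAddCommGroup E] [InnerProductSpace ℝ E]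
    (μ ν : Measure E) : ℝ :=
  sSup {r | ∃ φ : E → ℝ, ContDiff ℝ (⊤ : ℕ∞) φ ∧ HasCompactSupport φ ∧
    (∀ x, |φ x| ≤ 1) ∧ (∀ x, ‖fderiv ℝ φ x‖ ≤ 1) ∧ r = ∫ x, φ x ∂μ - ∫ x, φ x ∂ν}

/-- σ(μ − ν, t) for two measures. -/
def sigmaDiff {k : ℕ} (μ ν : Measure (Ek k)) (t : ℝ) : ℝ :=
  sSup {r | ∃ (φ : Ek k → ℝ) (e : Ek k), ContDiff ℝ (⊤ : ℕ∞) φ ∧ HasCompactSupport φ ∧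
    ‖e‖ = 1 ∧ (∀ x, |φ x| ≤ t) ∧ (∀ x, |fderiv ℝ φ x e| ≤ 1) ∧
    r = ∫ x, fderiv ℝ φ x e ∂μ - ∫ x, fderiv ℝ φ x e ∂ν}

/-- σ(μ, t) for a single measure on ℝ^k. -/
def sigmaMeas {k : ℕ} (μ : Measure (Ek k)) (t : ℝ) : ℝ :=
  sSup {r | ∃ (φ : Ek k → ℝ) (e : Ek k), ContDiff ℝ (⊤ : ℕ∞) φ ∧ HasCompactSupport φ ∧
    ‖e‖ = 1 ∧ (∀ x, |φ x| ≤ t) ∧ (∀ x, |fderiv ℝ φ x e| ≤ 1) ∧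
    r = ∫ x, fderiv ℝ φ x e ∂μ}

/-- The standard Gaussian measure on ℝ^n. -/
def gaussE (n : ℕ) : Measure (Ek n) :=
  volume.withDensity (fun x => ENNReal.ofReal ((2 * π) ^ (-(n : ℝ) / 2) * exp (-‖x‖ ^ 2 / 2)))

/-- Hessian of f as a continuous linear map (the second derivative). -/
def hess {n : ℕ} (f : Ek n → ℝ) (x : Ek n) : Ek n →L[ℝ] Ek n := fderiv ℝ (gradient f) x

/-- Hilbert–Schmidt norm of an operator on ℝ^n. -/
def hsN {n : ℕ} (A : Ek n →L[ℝ] Ek n) : ℝ :=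
  Real.sqrt (∑ i, ∑ j,
    (inner ℝ (A (EuclideanSpace.single i 1)) (EuclideanSpace.single j 1) : ℝ) ^ 2)

/-- Ornstein–Uhlenbeck operator Lf = Δf − ⟨x, ∇f⟩. -/
def ouL {n : ℕ} (f : Ek n → ℝ) (x : Ek n) : ℝ :=
  (∑ i, (inner ℝ (hess f x (EuclideanSpace.single i 1)) (EuclideanSpace.single i 1) : ℝ)) -
    (inner ℝ x (gradient f x) : ℝ)

/-- Gaussian L^p norm. -/
def lpN {X : Type*} [MeasurableSpace X] (γ : Measure X) (p : ℝ) (f : X → ℝ) : ℝ :=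
  (∫ x, |f x| ^ p ∂γ) ^ (1 / p)

/-- Gaussian Sobolev W^{p,2} norm of a scalar function. -/
def wNorm {n : ℕ} (p : ℝ) (f : Ek n → ℝ) : ℝ :=
  lpN (gaussE n) p f + lpN (gaussE n) p (fun x => ‖gradient f x‖) +
    lpN (gaussE n) p (fun x => hsN (hess f x))

/-- The class C_b^∞: smooth with all derivatives bounded. -/
def CbInf {n : ℕ} (f : Ek n → ℝ) : Prop :=
  ContDiff ℝ (⊤ : ℕ∞) f ∧ ∀ i : ℕ, ∃ C, ∀ x, ‖iteratedFDeriv ℝ i f x‖ ≤ C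

/-- Malliavin matrix of a map f : ℝ^n → ℝ^k. -/
def mall {n k : ℕ} (f : Ek n → Ek k) (x : Ek n) : Matrix (Fin k) (Fin k) ℝ :=
  fun i j => (inner ℝ (gradient (fun y => f y i) x) (gradient (fun y => f y j) x) : ℝ)

/-- Malliavin determinant Δ_f. -/
def malDet {n k : ℕ} (f : Ek n → Ek k) (x : Ek n) : ℝ := (mall f x).det

/-- u_γ(g, ε) = ∫₀^∞ (s+1)^{-2} γ(g ≤ εs) ds. -/
def uGamma {X : Type*} [MeasurableSpace X] (γ : Measure X) (g : X → ℝ) (ε : ℝ) : ℝ :=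
  ∫ s in Set.Ioi (0:ℝ), (s + 1) ^ (-(2:ℝ)) * (γ {x | g x ≤ ε * s}).toReal

lemma rpow_neg_two_eq (s : ℝ) : s ^ (-(2:ℝ)) = (s^2)⁻¹ := by
  rw [show (-(2:ℝ)) = ((-2:ℤ):ℝ) by norm_num, Real.rpow_intCast, zpow_neg, zpow_two, sq]

lemma hasDeriv_aux {s : ℝ} (hs : s + 1 ≠ 0) :
    HasDerivAt (fun t => -(t+1)⁻¹) (((s+1)^2)⁻¹) s := by
  have h := (((hasDerivAt_id s).add_const 1).inv hs).neg
  convert h using 1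
  · rfl
  · rfl
  · rfl
  · simp [neg_div]

lemma tendsto_aux : Filter.Tendsto (fun t : ℝ => -(t+1)⁻¹) Filter.atTop (nhds 0) := by
  have : Filter.Tendsto (fun t : ℝ => (t+1)⁻¹) Filter.atTop (nhds 0) :=
    tendsto_inv_atTop_zero.comp (Filter.tendsto_atTop_add_const_right _ 1 Filter.tendsto_id)
  simpa using this.neg

lemma integral_aux {a : ℝ} (ha : -1 < a) :
    ∫ s in Set.Ioi a, (s+1) ^ (-(2:ℝ)) = (a+1)⁻¹ := by
  have hderiv : ∀ s ∈ Set.Ici a, HasDerivAt (fun t => -(t+1)⁻¹) (((s+1)^2)⁻¹) s :=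
    fun s hs => hasDeriv_aux (by simp only [Set.mem_Ici] at hs; nlinarith)
  have h := integral_Ioi_of_hasDerivAt_of_nonneg' hderiv
    (fun s _ => by positivity) tendsto_aux
  simp only [rpow_neg_two_eq]
  rw [h]; ring

lemma integrableOn_aux {a : ℝ} (ha : -1 < a) :
    IntegrableOn (fun s => (s+1) ^ (-(2:ℝ))) (Set.Ioi a) := by
  have hderiv : ∀ s ∈ Set.Ici a, HasDerivAt (fun t => -(t+1)⁻¹) (((s+1)^2)⁻¹) s :=
    fun s hs => hasDeriv_aux (by simp only [Set.mem_Ici] at hs; nlinarith)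
  have h := integrableOn_Ioi_deriv_of_nonneg' hderiv (fun s _ => by positivity) tendsto_aux
  simpa only [rpow_neg_two_eq] using h

lemma lintegral_aux {a : ℝ} (ha : 0 ≤ a) :
    ∫⁻ s in Set.Ioi a, ENNReal.ofReal ((s+1) ^ (-(2:ℝ))) = ENNReal.ofReal ((a+1)⁻¹) := by
  rw [← ofReal_integral_eq_lintegral_ofReal (integrableOn_aux (by linarith))
    (Filter.Eventually.of_forall (fun s => by simp only [rpow_neg_two_eq, Pi.zero_apply]; positivity)), integral_aux (by linarith)]

theorem stmt0 {X : Type*} [MeasurableSpace X] (γ : Measure X) [IsProbabilityMeasure γ]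
    (g : X → ℝ) (hgm : Measurable g) (hg0 : ∀ x, 0 ≤ g x)
    (r ε : ℝ) (hr : 1 ≤ r) (hε : 0 < ε) :
    ∫ x, (g x + ε) ^ (-r) ∂γ ≤ r * ε ^ (-r) * uGamma γ g ε := by
  have hgε : ∀ x, (0:ℝ) < g x + ε := fun x => by have := hg0 x; linarith
  -- B := ∫ (g+ε)⁻¹
  set B : ℝ := ∫ x, (g x + ε)⁻¹ ∂γ with hB
  have hmB : Measurable (fun x => (g x + ε)⁻¹) := (hgm.add_const ε).inv
  have hB_int : Integrable (fun x => (g x + ε)⁻¹) γ := by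
    refine (integrable_const (ε⁻¹)).mono' hmB.aestronglyMeasurable ?_
    refine Filter.Eventually.of_forall (fun x => ?_)
    rw [Real.norm_eq_abs, abs_of_nonneg (inv_nonneg.2 (hgε x).le)]
    exact inv_anti₀ hε (by have := hg0 x; linarith)
  -- Step 1: pointwise bound and integral comparison
  have hpt : ∀ x, (g x + ε) ^ (-r) ≤ r * ε ^ (1 - r) * (g x + ε)⁻¹ := by
    intro x
    have h1 : (g x + ε) ^ (-r) = (g x + ε) ^ (1 - r) * (g x + ε)⁻¹ := by
      rw [← Real.rpow_neg_one (g x + ε), ← Real.rpow_add (hgε x)]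
      congr 1; ring
    rw [h1]
    have h2 : (g x + ε) ^ (1 - r) ≤ ε ^ (1 - r) :=
      Real.rpow_le_rpow_of_nonpos hε (by have := hg0 x; linarith) (by linarith)
    have h3 : ε ^ (1 - r) ≤ r * ε ^ (1 - r) := by
      nlinarith [Real.rpow_pos_of_pos hε (1 - r)]
    have h4 : (0:ℝ) ≤ (g x + ε)⁻¹ := inv_nonneg.2 (hgε x).le
    nlinarith
  have hmA : Measurable (fun x => (g x + ε) ^ (-r)) := by
    have he : (fun x => (g x + ε) ^ (-r)) = fun x => Real.exp (Real.log (g x + ε) * (-r)) := by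
      funext x; rw [Real.rpow_def_of_pos (hgε x)]
    rw [he]
    exact Real.measurable_exp.comp ((Real.measurable_log.comp (hgm.add_const ε)).mul_const (-r))
  have hA_int : Integrable (fun x => (g x + ε) ^ (-r)) γ := by
    refine (integrable_const (ε ^ (-r))).mono' hmA.aestronglyMeasurable ?_
    refine Filter.Eventually.of_forall (fun x => ?_)
    rw [Real.norm_eq_abs, abs_of_nonneg (Real.rpow_nonneg (hgε x).le _)]
    exact Real.rpow_le_rpow_of_nonpos hε (by have := hg0 x; linarith) (by linarith)
  have step1 : ∫ x, (g x + ε) ^ (-r) ∂γ ≤ r * ε ^ (1 - r) * B := by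
    rw [hB, ← integral_const_mul]
    exact integral_mono hA_int (hB_int.const_mul _) hpt
  -- Step 2: uGamma = ε * B via Tonelli
  set L : ENNReal := ∫⁻ x, ENNReal.ofReal ((g x + ε)⁻¹) ∂γ with hL
  have hBL : B = L.toReal := by
    rw [hB, integral_eq_lintegral_of_nonneg_ae
      (Filter.Eventually.of_forall (fun x => inv_nonneg.2 (hgε x).le)) hmB.aestronglyMeasurable]
  -- product set
  set S : Set (ℝ × X) := {p | g p.2 ≤ ε * p.1} with hS
  have hSm : MeasurableSet S :=
    measurableSet_le (hgm.comp measurable_snd) (measurable_fst.const_mul ε)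
  set F : ℝ × X → ENNReal := S.indicator (fun p => ENNReal.ofReal ((p.1 + 1) ^ (-(2:ℝ)))) with hF
  have hm2 : Measurable (fun t : ℝ => t ^ (-(2:ℝ))) := by
    have he : (fun t : ℝ => t ^ (-(2:ℝ))) = fun t => (t^2)⁻¹ := funext fun t => rpow_neg_two_eq t
    rw [he]; exact (measurable_id.pow_const 2).inv
  have hFm : Measurable F := by
    apply Measurable.indicator _ hSm
    exact (hm2.comp (measurable_fst.add_const 1)).ennreal_ofReal
  have key : ∫⁻ s in Set.Ioi (0:ℝ), ENNReal.ofReal ((s+1) ^ (-(2:ℝ))) * γ {x | g x ≤ ε * s}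
      = ENNReal.ofReal ε * L := by
    calc ∫⁻ s in Set.Ioi (0:ℝ), ENNReal.ofReal ((s+1) ^ (-(2:ℝ))) * γ {x | g x ≤ ε * s}
        = ∫⁻ s in Set.Ioi (0:ℝ), ∫⁻ x, F (s, x) ∂γ := by
          refine setLIntegral_congr_fun measurableSet_Ioi
            (fun s _ => ?_)
          have : (fun x => F (s, x)) =
              Set.indicator {x | g x ≤ ε * s} (fun _ => ENNReal.ofReal ((s+1) ^ (-(2:ℝ)))) := by
            ext x
            by_cases h : g x ≤ ε * s <;>
              simp [hF, hS, Set.indicator, h]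
          rw [this, lintegral_indicator (measurableSet_le hgm measurable_const),
            setLIntegral_const]
      _ = ∫⁻ x, ∫⁻ s in Set.Ioi (0:ℝ), F (s, x) ∂volume ∂γ := by
          exact lintegral_lintegral_swap (hFm.aemeasurable)
      _ = ∫⁻ x, ENNReal.ofReal (ε * (g x + ε)⁻¹) ∂γ := by
          refine lintegral_congr (fun x => ?_)
          have ha : (0:ℝ) ≤ g x / ε := div_nonneg (hg0 x) hε.le
          have hset : (fun s => F (s, x)) =
              Set.indicator (Set.Ici (g x / ε)) (fun s => ENNReal.ofReal ((s+1) ^ (-(2:ℝ)))) := by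
            ext s
            have : (s, x) ∈ S ↔ s ∈ Set.Ici (g x / ε) := by
              simp [hS, Set.mem_Ici, div_le_iff₀ hε, mul_comm]
            by_cases h : s ∈ Set.Ici (g x / ε) <;>
              simp [hF, Set.indicator, this, h]
          rw [hset, lintegral_indicator measurableSet_Ici, Measure.restrict_restrict
            measurableSet_Ici]
          have hae : (Set.Ici (g x / ε) ∩ Set.Ioi 0 : Set ℝ) =ᵐ[volume] Set.Ioi (g x / ε) := by
            have h0 : (volume : Measure ℝ) {g x / ε} = 0 := measure_singleton _
            filter_upwards [compl_mem_ae_iff.2 h0] with s hs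
            simp only [Set.mem_compl_iff, Set.mem_singleton_iff] at hs
            simp only [Set.mem_inter_iff, Set.mem_Ici, Set.mem_Ioi, eq_iff_iff]
            constructor
            · rintro ⟨h1, _⟩; exact lt_of_le_of_ne h1 (Ne.symm hs)
            · intro h1; exact ⟨h1.le, lt_of_le_of_lt ha h1⟩
          rw [Measure.restrict_congr_set hae, lintegral_aux ha]
          congr 1
          rw [eq_comm]
          field_simp
      _ = ENNReal.ofReal ε * L := by
          rw [hL, ← lintegral_const_mul _ (hmB.ennreal_ofReal)]
          refine lintegral_congr (fun x => ?_)
          rw [← ENNReal.ofReal_mul hε.le]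
  have hLfin : L ≠ ⊤ := by
    have hle : L ≤ ∫⁻ _, ENNReal.ofReal (ε⁻¹) ∂γ := by
      refine lintegral_mono (fun x => ?_)
      exact ENNReal.ofReal_le_ofReal (inv_anti₀ hε (by have := hg0 x; linarith))
    rw [lintegral_const] at hle
    exact ne_top_of_le_ne_top (by finiteness) hle
  have hu : uGamma γ g ε = ε * B := by
    have hmono : Monotone (fun s => (γ {x | g x ≤ ε * s}).toReal) := by
      intro s t hst
      apply ENNReal.toReal_mono (measure_ne_top _ _)
      refine measure_mono (fun x hx => ?_)
      simp only [Set.mem_setOf_eq] at hx ⊢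
      nlinarith
    have hints : AEStronglyMeasurable
        (fun s => (s + 1) ^ (-(2:ℝ)) * (γ {x | g x ≤ ε * s}).toReal)
        (volume.restrict (Set.Ioi (0:ℝ))) := by
      exact ((hm2.comp (measurable_id.add_const 1)).mul hmono.measurable).aestronglyMeasurable
    rw [uGamma, integral_eq_lintegral_of_nonneg_ae
      (Filter.Eventually.of_forall (fun s => by
        have : (0:ℝ) ≤ (s + 1) ^ (-(2:ℝ)) := by
          rw [rpow_neg_two_eq]; positivity
        positivity)) hints]
    have : ∫⁻ s in Set.Ioi (0:ℝ),
        ENNReal.ofReal ((s + 1) ^ (-(2:ℝ)) * (γ {x | g x ≤ ε * s}).toReal)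
        = ∫⁻ s in Set.Ioi (0:ℝ), ENNReal.ofReal ((s+1) ^ (-(2:ℝ))) * γ {x | g x ≤ ε * s} := by
      refine lintegral_congr (fun s => ?_)
      rw [ENNReal.ofReal_mul (by rw [rpow_neg_two_eq]; positivity),
        ENNReal.ofReal_toReal (measure_ne_top _ _)]
    rw [this, key, ENNReal.toReal_mul, ENNReal.toReal_ofReal hε.le, hBL]
  -- conclude
  rw [hu]
  calc ∫ x, (g x + ε) ^ (-r) ∂γ ≤ r * ε ^ (1 - r) * B := step1
    _ = r * ε ^ (-r) * (ε * B) := by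
        rw [show (1:ℝ) - r = 1 + (-r) by ring, Real.rpow_add hε, Real.rpow_one]
        ring
end
end

section
/- For any finite signed Borel measure μ on ℝ^k and any h ∈ ℝ^k, the total variation norm of the difference between μ and its shift μ_h satisfies ‖μ_h − μ‖_TV ≤ 2 σ(μ, |h|/2), where σ(μ,t) = sup{∫ ∂_e φ dμ : φ ∈ C₀^∞(ℝ^k), ‖φ‖_∞ ≤ t, ‖∂_e φ‖_∞ ≤ 1, |e|=1}. -/
open MeasureTheory Real
noncomputable section

-- helper: integrable of bounded continuous on finite measure
lemma bddInt {E : Type*} [MeasurableSpace E] [TopologicalSpace E] [OpensMeasurableSpace E]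
    (m : Measure E) [IsFiniteMeasure m] {f : E → ℝ} (hf : Continuous f) {C : ℝ}
    (hC : ∀ x, |f x| ≤ C) : Integrable f m :=
  ⟨hf.aestronglyMeasurable, HasFiniteIntegral.of_bounded (C := C)
    (Filter.Eventually.of_forall (fun x => by simpa [Real.norm_eq_abs] using hC x))⟩

-- toSignedMeasure commutes with map
lemma toSM_map {E : Type*} [MeasurableSpace E] (a : Measure E) [IsFiniteMeasure a]
    {T : E → E} (hT : Measurable T) :
    (a.map T).toSignedMeasure = a.toSignedMeasure.map T := by
  ext s hs
  rw [VectorMeasure.map_apply _ hT hs,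
    Measure.toSignedMeasure_apply_measurable hs,
    Measure.toSignedMeasure_apply_measurable (hT hs),
    map_measureReal_apply hT hs]

lemma jordan_eq {E : Type*} [MeasurableSpace E] (μ : SignedMeasure E) (c d : Measure E)
    [IsFiniteMeasure c] [IsFiniteMeasure d]
    (hμ : μ = c.toSignedMeasure - d.toSignedMeasure) :
    μ.toJordanDecomposition.posPart + d = μ.toJordanDecomposition.negPart + c := by
  have h1 : μ.toJordanDecomposition.posPart.toSignedMeasure -
      μ.toJordanDecomposition.negPart.toSignedMeasure = μ := by
    have := μ.toSignedMeasure_toJordanDecomposition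
    rwa [JordanDecomposition.toSignedMeasure] at this
  rw [← Measure.toSignedMeasure_eq_toSignedMeasure_iff]
  rw [Measure.toSignedMeasure_add, Measure.toSignedMeasure_add]
  have := h1.trans hμ
  linear_combination (norm := abel) this

lemma sInt_eq_of_decomp {E : Type*} [MeasurableSpace E] [TopologicalSpace E]
    [OpensMeasurableSpace E] (μ : SignedMeasure E) (c d : Measure E)
    [IsFiniteMeasure c] [IsFiniteMeasure d]
    (hμ : μ = c.toSignedMeasure - d.toSignedMeasure) {φ : E → ℝ} (hφ : Continuous φ)
    {C : ℝ} (hC : ∀ x, |φ x| ≤ C) :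
    sInt μ φ = ∫ x, φ x ∂c - ∫ x, φ x ∂d := by
  have key := jordan_eq μ c d hμ
  have h1 : ∫ x, φ x ∂(μ.toJordanDecomposition.posPart + d) =
      ∫ x, φ x ∂(μ.toJordanDecomposition.negPart + c) := by rw [key]
  rw [integral_add_measure (bddInt _ hφ hC) (bddInt _ hφ hC),
    integral_add_measure (bddInt _ hφ hC) (bddInt _ hφ hC)] at h1
  unfold sInt
  linarith

lemma psi_exists {k : ℕ} (φ : Ek k → ℝ) (hφsm : ContDiff ℝ (⊤:ℕ∞) φ)
    (hφc : HasCompactSupport φ) (hφ1 : ∀ x, |φ x| ≤ 1) (h : Ek k) (hh : h ≠ 0) :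
    ∃ ψ : Ek k → ℝ, ContDiff ℝ (⊤:ℕ∞) ψ ∧ HasCompactSupport ψ ∧
      (∀ x, |ψ x| ≤ ‖h‖/2) ∧
      (∀ x, fderiv ℝ ψ x (‖h‖⁻¹ • h) = (1/2)*φ (x+h) - (1/2)*φ x) := by
  set L : ℝ := ‖h‖ with hLdef
  have hL : 0 < L := norm_pos_iff.mpr hh
  set e : Ek k := ‖h‖⁻¹ • h with hedef
  have hLe : L • e = h := by
    rw [hedef, smul_smul, mul_inv_cancel₀ (ne_of_gt hL), one_smul]
  set ρ : Measure (Ek k) :=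
    Measure.map (fun s : ℝ => s • (-e)) (volume.restrict (Set.Ioc 0 L)) with hρdef
  have hmeas : Measurable (fun s : ℝ => s • (-e)) := by fun_prop
  haveI : IsFiniteMeasure (volume.restrict (Set.Ioc (0:ℝ) L)) := by
    constructor
    rw [Measure.restrict_apply_univ, Real.volume_Ioc]
    exact ENNReal.ofReal_lt_top
  haveI : IsFiniteMeasure ρ := by
    constructor
    rw [hρdef, Measure.map_apply hmeas MeasurableSet.univ]
    simp only [Set.preimage_univ]
    exact measure_lt_top _ _
  set f : Ek k → ℝ := fun _ => (1/2 : ℝ) with hfdef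
  have hfint : MeasureTheory.LocallyIntegrable f ρ := (integrable_const _).locallyIntegrable
  set ψ : Ek k → ℝ := convolution f φ (ContinuousLinearMap.mul ℝ ℝ) ρ with hψdef
  have key : ∀ y, ψ y = ∫ s in (0:ℝ)..L, (1/2) * φ (y + s • e) := by
    intro y
    rw [hψdef, convolution_def]
    rw [hρdef, integral_map hmeas.aemeasurable]
    · rw [intervalIntegral.integral_of_le hL.le]
      congr 1
      ext s
      simp [hfdef, smul_neg, sub_neg_eq_add]
    · have : (fun t => (ContinuousLinearMap.mul ℝ ℝ) (f t) (φ (y - t)))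
          = fun t : Ek k => (1/2:ℝ) * φ (y - t) := rfl
      rw [this]
      exact (continuous_const.mul (hφsm.continuous.comp
        (continuous_const.sub continuous_id))).aestronglyMeasurable
  have hψsm : ContDiff ℝ (⊤:ℕ∞) ψ :=
    hφc.contDiff_convolution_right _ hfint hφsm
  -- directional derivative
  have hfder : ∀ x₀, fderiv ℝ ψ x₀ e = (1/2)*φ (x₀+h) - (1/2)*φ x₀ := by
    intro x₀
    have hg1 : Continuous (fun s : ℝ => φ (x₀ + s • e)) := by
      exact hφsm.continuous.comp (continuous_const.add (continuous_id.smul continuous_const))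
    set F : ℝ → ℝ := fun r => ∫ s in (0:ℝ)..r, φ (x₀ + s • e) with hFdef
    have hF : ∀ r, HasDerivAt F (φ (x₀ + r • e)) r := fun r =>
      (hg1.integral_hasStrictDerivAt 0 r).hasDerivAt
    have hv : (fun r : ℝ => ψ (x₀ + r • e)) = fun r => (1/2) * (F (L + r) - F r) := by
      funext r
      rw [key]
      have : ∀ s : ℝ, x₀ + r • e + s • e = x₀ + (s + r) • e := by
        intro s; rw [add_smul]; abel
      simp_rw [this]
      rw [show (∫ s in (0:ℝ)..L, (1/2) * φ (x₀ + (s + r) • e))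
          = (1/2) * ∫ s in (0:ℝ)..L, φ (x₀ + (s + r) • e) from
        intervalIntegral.integral_const_mul _ _]
      congr 1
      rw [intervalIntegral.integral_comp_add_right (fun s => φ (x₀ + s • e)) r, zero_add]
      rw [hFdef]
      rw [← intervalIntegral.integral_interval_sub_left
        (hg1.intervalIntegrable 0 (L + r)) (hg1.intervalIntegrable 0 r)]
    have h2 : HasDerivAt (fun r : ℝ => ψ (x₀ + r • e)) ((1/2)*φ (x₀+h) - (1/2)*φ x₀) 0 := by
      rw [hv]
      have d1 : HasDerivAt (fun r : ℝ => F (L + r)) (φ (x₀ + (L + 0) • e) * 1) 0 :=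
        (hF (L + 0)).comp 0 ((hasDerivAt_id (0:ℝ)).const_add L)
      have d2 := (d1.sub (hF 0)).const_mul (1/2 : ℝ)
      refine d2.congr_deriv ?_
      rw [add_zero, hLe, zero_smul, add_zero]
      ring
    have h1 : HasDerivAt (fun r : ℝ => ψ (x₀ + r • e)) (fderiv ℝ ψ x₀ e) 0 := by
      have hψd := (hψsm.differentiable (by simp) x₀).hasFDerivAt
      have hline : HasDerivAt (fun r : ℝ => x₀ + r • e) e 0 := by
        simpa using ((hasDerivAt_id (0:ℝ)).smul_const e).const_add x₀
      have hψd' : HasFDerivAt ψ (fderiv ℝ ψ x₀) (x₀ + (0:ℝ) • e) := by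
        simpa using hψd
      exact hψd'.comp_hasDerivAt 0 hline
    exact h1.unique h2
  -- bound on ψ
  have hψb : ∀ x, |ψ x| ≤ ‖h‖ / 2 := by
    intro x
    rw [key, ← Real.norm_eq_abs]
    have := intervalIntegral.norm_integral_le_of_norm_le_const
      (C := 1/2) (a := (0:ℝ)) (b := L) (f := fun s => (1/2) * φ (x + s • e)) ?_
    · calc ‖∫ s in (0:ℝ)..L, (1/2) * φ (x + s • e)‖ ≤ 1/2 * |L - 0| := this
        _ = ‖h‖ / 2 := by rw [sub_zero, abs_of_pos hL]; ring
    · intro s _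
      rw [Real.norm_eq_abs, abs_mul]
      calc |1/2| * |φ (x + s • e)| ≤ |1/2| * 1 := by
            apply mul_le_mul_of_nonneg_left (hφ1 _) (abs_nonneg _)
        _ = 1/2 := by norm_num
  -- compact support
  have hψc : HasCompactSupport ψ := by
    have hC : IsCompact ((fun p : ℝ × Ek k => p.2 - p.1 • e) ''
        (Set.Icc 0 L ×ˢ tsupport φ)) :=
      (isCompact_Icc.prod hφc).image (by fun_prop)
    apply HasCompactSupport.intro hC
    intro x hx
    rw [key]
    rw [intervalIntegral.integral_of_le hL.le]
    apply MeasureTheory.setIntegral_eq_zero_of_forall_eq_zero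
    intro s hs
    have : φ (x + s • e) = 0 := by
      by_contra hne
      apply hx
      refine ⟨(s, x + s • e), ⟨⟨hs.1.le, hs.2⟩, subset_tsupport φ hne⟩, add_sub_cancel_right x (s • e)⟩
    rw [this, mul_zero]
  exact ⟨ψ, hψsm, hψc, hψb, hfder⟩

theorem stmt4 {k : ℕ} (μ : SignedMeasure (Ek k)) (h : Ek k) :
    tvSM (shiftSM μ h - μ) ≤ 2 * sigmaSM μ (‖h‖ / 2) := by
  set p := μ.toJordanDecomposition.posPart with hp
  set n := μ.toJordanDecomposition.negPart with hn
  haveI hpf : IsFiniteMeasure p := inferInstance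
  haveI hnf : IsFiniteMeasure n := inferInstance
  have hμdec : @Measure.toSignedMeasure _ _ p hpf - @Measure.toSignedMeasure _ _ n hnf = μ := by
    have := μ.toSignedMeasure_toJordanDecomposition
    rwa [JordanDecomposition.toSignedMeasure] at this
  clear_value p n
  unfold tvSM sigmaSM
  have hBdd : BddAbove {r | ∃ (φ : Ek k → ℝ) (e : Ek k), ContDiff ℝ (⊤:ℕ∞) φ ∧
      HasCompactSupport φ ∧ ‖e‖ = 1 ∧ (∀ x, |φ x| ≤ ‖h‖/2) ∧
      (∀ x, |fderiv ℝ φ x e| ≤ 1) ∧ r = sInt μ (fun x => fderiv ℝ φ x e)} := by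
    refine ⟨(p Set.univ).toReal + (n Set.univ).toReal, ?_⟩
    rintro r ⟨φ, e, hsm, hc, he, hb, hd, rfl⟩
    have hcont : Continuous fun x => fderiv ℝ φ x e :=
      (ContinuousLinearMap.apply ℝ ℝ e).continuous.comp
        (hsm.continuous_fderiv (by simp))
    have h1 : ‖∫ x, fderiv ℝ φ x e ∂p‖ ≤ 1 * (p Set.univ).toReal :=
      norm_integral_le_of_norm_le_const
        (Filter.Eventually.of_forall (fun x => by simpa [Real.norm_eq_abs] using hd x))
    have h2 : ‖∫ x, fderiv ℝ φ x e ∂n‖ ≤ 1 * (n Set.univ).toReal :=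
      norm_integral_le_of_norm_le_const
        (Filter.Eventually.of_forall (fun x => by simpa [Real.norm_eq_abs] using hd x))
    rw [Real.norm_eq_abs] at h1 h2
    unfold sInt
    have := abs_le.mp h1; have := abs_le.mp h2
    simp only [← hp, ← hn]
    linarith [(abs_le.mp h1).1, (abs_le.mp h1).2, (abs_le.mp h2).1, (abs_le.mp h2).2]
  have hσ0 : 0 ≤ sSup {r | ∃ (φ : Ek k → ℝ) (e : Ek k), ContDiff ℝ (⊤:ℕ∞) φ ∧
      HasCompactSupport φ ∧ ‖e‖ = 1 ∧ (∀ x, |φ x| ≤ ‖h‖/2) ∧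
      (∀ x, |fderiv ℝ φ x e| ≤ 1) ∧ r = sInt μ (fun x => fderiv ℝ φ x e)} := by
    rcases Nat.eq_zero_or_pos k with hk | hk
    · subst hk
      have hempty : {r | ∃ (φ : Ek 0 → ℝ) (e : Ek 0), ContDiff ℝ (⊤:ℕ∞) φ ∧
          HasCompactSupport φ ∧ ‖e‖ = 1 ∧ (∀ x, |φ x| ≤ ‖h‖/2) ∧
          (∀ x, |fderiv ℝ φ x e| ≤ 1) ∧ r = sInt μ (fun x => fderiv ℝ φ x e)} = ∅ := by
        ext r
        simp only [Set.mem_empty_iff_false, iff_false, Set.mem_setOf_eq]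
        rintro ⟨φ, e, _, _, he, _⟩
        have : e = 0 := Subsingleton.elim e 0
        rw [this, norm_zero] at he
        norm_num at he
      rw [hempty, Real.sSup_empty]
    · apply le_csSup hBdd
      refine ⟨(fun _ => 0), EuclideanSpace.single ⟨0, hk⟩ 1, contDiff_const, ?_, ?_, ?_, ?_, ?_⟩
      · exact HasCompactSupport.zero
      · simp [EuclideanSpace.norm_single]
      · intro x; simp; positivity
      · intro x; simp [fderiv_const]
      · unfold sInt; simp [fderiv_const]
  apply Real.sSup_le _ (by linarith)
  rintro r ⟨φ, hsm, hc, hb1, rfl⟩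
  have hφcont : Continuous φ := hsm.continuous
  by_cases hh : h = 0
  · subst hh
    have hz : shiftSM μ 0 - μ = 0 := by
      unfold shiftSM
      have hid : (· + (0 : Ek k)) = id := by funext x; simp
      rw [hid, VectorMeasure.map_id, sub_self]
    rw [hz]
    have h0 : sInt (0 : SignedMeasure (Ek k)) φ = 0 := by
      have hzz : (0 : SignedMeasure (Ek k)) =
          (0 : Measure (Ek k)).toSignedMeasure - (0 : Measure (Ek k)).toSignedMeasure := by
        simp
      have := sInt_eq_of_decomp (0 : SignedMeasure (Ek k)) 0 0 hzz hφcont hb1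
      simpa using this
    rw [h0]; linarith
  · obtain ⟨ψ, hψsm, hψc, hψb, hψd⟩ := psi_exists φ hsm hc hb1 h hh
    have hL : 0 < ‖h‖ := norm_pos_iff.mpr hh
    set e : Ek k := ‖h‖⁻¹ • h with hedef
    have he : ‖e‖ = 1 := by
      rw [hedef, norm_smul, Real.norm_eq_abs, abs_inv, abs_norm, inv_mul_cancel₀ hL.ne']
    have hψd1 : ∀ x, |fderiv ℝ ψ x e| ≤ 1 := by
      intro x
      rw [hψd x]
      have t1 : |1/2 * φ (x+h)| ≤ 1/2 := by
        rw [abs_mul]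
        calc |1/2| * |φ (x+h)| ≤ |1/2| * 1 :=
              mul_le_mul_of_nonneg_left (hb1 _) (abs_nonneg _)
          _ = 1/2 := by norm_num
      have t2 : |1/2 * φ x| ≤ 1/2 := by
        rw [abs_mul]
        calc |1/2| * |φ x| ≤ |1/2| * 1 :=
              mul_le_mul_of_nonneg_left (hb1 _) (abs_nonneg _)
          _ = 1/2 := by norm_num
      have := abs_add_le (1/2 * φ (x+h)) (-(1/2 * φ x))
      rw [abs_neg] at this
      calc |1/2 * φ (x+h) - 1/2 * φ x| ≤ |1/2 * φ (x+h)| + |1/2 * φ x| := by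
            simpa [sub_eq_add_neg] using this
        _ ≤ 1 := by linarith
    have hle : sInt μ (fun x => fderiv ℝ ψ x e) ≤
        sSup {r | ∃ (φ : Ek k → ℝ) (e : Ek k), ContDiff ℝ (⊤:ℕ∞) φ ∧
          HasCompactSupport φ ∧ ‖e‖ = 1 ∧ (∀ x, |φ x| ≤ ‖h‖/2) ∧
          (∀ x, |fderiv ℝ φ x e| ≤ 1) ∧ r = sInt μ (fun x => fderiv ℝ φ x e)} :=
      le_csSup hBdd ⟨ψ, e, hψsm, hψc, he, hψb, hψd1, rfl⟩
    -- now compute sInt (shiftSM μ h - μ) φ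
    set T : Ek k → Ek k := (· + h) with hTdef
    have hTm : Measurable T := measurable_add_const h
    haveI : IsFiniteMeasure (p.map T) :=
      ⟨by rw [Measure.map_apply hTm MeasurableSet.univ]; simpa using measure_lt_top p _⟩
    haveI : IsFiniteMeasure (n.map T) :=
      ⟨by rw [Measure.map_apply hTm MeasurableSet.univ]; simpa using measure_lt_top n _⟩
    have hdec : shiftSM μ h - μ =
        (p.map T + n).toSignedMeasure - (n.map T + p).toSignedMeasure := by
      unfold shiftSM
      rw [← hμdec]
      have hmap : (p.toSignedMeasure - n.toSignedMeasure).map T =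
          p.toSignedMeasure.map T - n.toSignedMeasure.map T :=
        map_sub (VectorMeasure.mapGm T) _ _
      rw [hmap, ← toSM_map p hTm, ← toSM_map n hTm,
        Measure.toSignedMeasure_add, Measure.toSignedMeasure_add]
      abel
    have hr : sInt (shiftSM μ h - μ) φ =
        ∫ x, φ x ∂(p.map T + n) - ∫ x, φ x ∂(n.map T + p) :=
      sInt_eq_of_decomp _ _ _ hdec hφcont hb1
    have hIp : Integrable φ p := bddInt p hφcont hb1
    have hIn : Integrable φ n := bddInt n hφcont hb1
    have hIpT : Integrable φ (p.map T) := bddInt _ hφcont hb1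
    have hInT : Integrable φ (n.map T) := bddInt _ hφcont hb1
    rw [integral_add_measure hIpT hIn, integral_add_measure hInT hIp] at hr
    have hmp : ∫ x, φ x ∂(p.map T) = ∫ x, φ (x + h) ∂p :=
      integral_map hTm.aemeasurable hφcont.aestronglyMeasurable
    have hmn : ∫ x, φ x ∂(n.map T) = ∫ x, φ (x + h) ∂n :=
      integral_map hTm.aemeasurable hφcont.aestronglyMeasurable
    have hshift : Continuous fun x : Ek k => φ (x + h) :=
      hφcont.comp (continuous_id.add continuous_const)
    have hIps : Integrable (fun x => φ (x + h)) p := bddInt p hshift (fun x => hb1 _)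
    have hIns : Integrable (fun x => φ (x + h)) n := bddInt n hshift (fun x => hb1 _)
    have hsInt2 : sInt μ (fun x => fderiv ℝ ψ x e) =
        1/2 * (∫ x, φ (x + h) ∂p) - 1/2 * (∫ x, φ x ∂p)
        - (1/2 * (∫ x, φ (x + h) ∂n) - 1/2 * (∫ x, φ x ∂n)) := by
      have hfx : (fun x => fderiv ℝ ψ x e) =
          fun x => 1/2 * φ (x + h) - 1/2 * φ x := funext hψd
      unfold sInt
      rw [← hp, ← hn]
      rw [hfx, integral_sub (hIps.const_mul _) (hIp.const_mul _),
        integral_sub (hIns.const_mul _) (hIn.const_mul _),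
        integral_const_mul, integral_const_mul, integral_const_mul, integral_const_mul]
    rw [hr]
    linarith
end
end

section
/- For any finite signed Borel measure μ on ℝ^k and t > 0, σ(μ,t) ≤ 6k · sup_{|h| ≤ t} ‖μ_h − μ‖_TV, where σ(μ,t) = sup{∫ ∂_e φ dμ : φ ∈ C₀^∞(ℝ^k), ‖φ‖_∞ ≤ t, ‖∂_e φ‖_∞ ≤ 1, |e|=1}. -/
open MeasureTheory Real
noncomputable section

section Stmt5Aux
open MeasureTheory

variable {k : ℕ}

private lemma my_integrable {φ : Ek k → ℝ} (hφ : Continuous φ) {C : ℝ} (hb : ∀ x, |φ x| ≤ C)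
    (m : Measure (Ek k)) [IsFiniteMeasure m] : Integrable φ m :=
  (integrable_const C).mono' hφ.aestronglyMeasurable
    (Filter.Eventually.of_forall fun x => by simpa [Real.norm_eq_abs] using hb x)

private lemma my_int_bound {φ : Ek k → ℝ} (hφ : Continuous φ) {C : ℝ} (hC : 0 ≤ C)
    (hb : ∀ x, |φ x| ≤ C) (m : Measure (Ek k)) [IsFiniteMeasure m] :
    |∫ x, φ x ∂m| ≤ C * (m Set.univ).toReal := by
  simpa [Real.norm_eq_abs, measureReal_def] using
    norm_integral_le_of_norm_le_const (μ := m) (f := φ) (C := C)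
      (Filter.Eventually.of_forall fun x => by simpa [Real.norm_eq_abs] using hb x)

private lemma my_meas_eq {a b c d : Measure (Ek k)} [IsFiniteMeasure a] [IsFiniteMeasure b]
    [IsFiniteMeasure c] [IsFiniteMeasure d]
    (h : a.toSignedMeasure - b.toSignedMeasure = c.toSignedMeasure - d.toSignedMeasure) :
    a + d = c + b := by
  ext s hs
  have h1 : (a.toSignedMeasure - b.toSignedMeasure) s
      = (c.toSignedMeasure - d.toSignedMeasure) s := by rw [h]
  rw [VectorMeasure.sub_apply, VectorMeasure.sub_apply,
    Measure.toSignedMeasure_apply_measurable hs, Measure.toSignedMeasure_apply_measurable hs,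
    Measure.toSignedMeasure_apply_measurable hs, Measure.toSignedMeasure_apply_measurable hs] at h1
  rw [Measure.add_apply, Measure.add_apply,
    ← ENNReal.toReal_eq_toReal_iff' (by finiteness) (by finiteness),
    ENNReal.toReal_add (by finiteness) (by finiteness),
    ENNReal.toReal_add (by finiteness) (by finiteness)]
  simp only [measureReal_def] at h1
  linarith

/-- integral representation of `sInt` for any representation of `μ` as a difference. -/
private lemma my_sInt_repr (μ : SignedMeasure (Ek k)) (a b : Measure (Ek k))
    [IsFiniteMeasure a] [IsFiniteMeasure b]
    (h : μ = a.toSignedMeasure - b.toSignedMeasure)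
    {φ : Ek k → ℝ} (hφ : Continuous φ) {C : ℝ} (hb : ∀ x, |φ x| ≤ C) :
    sInt μ φ = ∫ x, φ x ∂a - ∫ x, φ x ∂b := by
  have hJ : μ.toJordanDecomposition.posPart.toSignedMeasure
      - μ.toJordanDecomposition.negPart.toSignedMeasure
      = a.toSignedMeasure - b.toSignedMeasure := by
    rw [← JordanDecomposition.toSignedMeasure, μ.toSignedMeasure_toJordanDecomposition, h]
  have hm : μ.toJordanDecomposition.posPart + b = a + μ.toJordanDecomposition.negPart :=
    my_meas_eq hJ
  have hint : ∫ x, φ x ∂(μ.toJordanDecomposition.posPart + b)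
      = ∫ x, φ x ∂(a + μ.toJordanDecomposition.negPart) := by rw [hm]
  rw [integral_add_measure (my_integrable hφ hb _) (my_integrable hφ hb _),
    integral_add_measure (my_integrable hφ hb _) (my_integrable hφ hb _)] at hint
  rw [sInt]
  linarith

private lemma my_sInt_sub (ρ μ : SignedMeasure (Ek k))
    {φ : Ek k → ℝ} (hφ : Continuous φ) {C : ℝ} (hb : ∀ x, |φ x| ≤ C) :
    sInt (ρ - μ) φ = sInt ρ φ - sInt μ φ := by
  have h1 : ρ - μ = (ρ.toJordanDecomposition.posPart + μ.toJordanDecomposition.negPart).toSignedMeasure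
      - (ρ.toJordanDecomposition.negPart + μ.toJordanDecomposition.posPart).toSignedMeasure := by
    rw [Measure.toSignedMeasure_add, Measure.toSignedMeasure_add]
    have h2 : ρ.toJordanDecomposition.posPart.toSignedMeasure
        - ρ.toJordanDecomposition.negPart.toSignedMeasure = ρ := by
      rw [← JordanDecomposition.toSignedMeasure, ρ.toSignedMeasure_toJordanDecomposition]
    have h3 : μ.toJordanDecomposition.posPart.toSignedMeasure
        - μ.toJordanDecomposition.negPart.toSignedMeasure = μ := by
      rw [← JordanDecomposition.toSignedMeasure, μ.toSignedMeasure_toJordanDecomposition]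
    conv_lhs => rw [← h2, ← h3]
    abel
  rw [my_sInt_repr _ _ _ h1 hφ hb,
    integral_add_measure (my_integrable hφ hb _) (my_integrable hφ hb _),
    integral_add_measure (my_integrable hφ hb _) (my_integrable hφ hb _), sInt, sInt]
  ring

private lemma my_shift_repr (μ : SignedMeasure (Ek k)) (h : Ek k) :
    shiftSM μ h = (μ.toJordanDecomposition.posPart.map (· + h)).toSignedMeasure
      - (μ.toJordanDecomposition.negPart.map (· + h)).toSignedMeasure := by
  have hmeas : Measurable (fun x : Ek k => x + h) := measurable_add_const h
  ext s hs
  rw [shiftSM, VectorMeasure.map_apply _ hmeas hs, VectorMeasure.sub_apply,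
    Measure.toSignedMeasure_apply_measurable hs, Measure.toSignedMeasure_apply_measurable hs,
    measureReal_def, measureReal_def, Measure.map_apply hmeas hs, Measure.map_apply hmeas hs]
  have : μ ((fun x : Ek k => x + h) ⁻¹' s)
      = (μ.toJordanDecomposition.posPart ((· + h) ⁻¹' s)).toReal
        - (μ.toJordanDecomposition.negPart ((· + h) ⁻¹' s)).toReal := by
    conv_lhs => rw [← μ.toSignedMeasure_toJordanDecomposition]
    rw [JordanDecomposition.toSignedMeasure, VectorMeasure.sub_apply,
      Measure.toSignedMeasure_apply_measurable (hmeas hs),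
      Measure.toSignedMeasure_apply_measurable (hmeas hs), measureReal_def, measureReal_def]
  exact this

private lemma my_sInt_shift (μ : SignedMeasure (Ek k)) (h : Ek k)
    {φ : Ek k → ℝ} (hφ : Continuous φ) {C : ℝ} (hb : ∀ x, |φ x| ≤ C) :
    sInt (shiftSM μ h) φ = sInt μ (fun x => φ (x + h)) := by
  have hmeas : Measurable (fun x : Ek k => x + h) := measurable_add_const h
  rw [my_sInt_repr _ _ _ (my_shift_repr μ h) hφ hb,
    integral_map hmeas.aemeasurable hφ.aestronglyMeasurable,
    integral_map hmeas.aemeasurable hφ.aestronglyMeasurable, sInt]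

end Stmt5Aux
section Stmt5Main
open MeasureTheory

variable {k : ℕ}

/-- Total mass bound for a signed measure. -/
private def myM (μ : SignedMeasure (Ek k)) : ℝ :=
  (μ.toJordanDecomposition.posPart Set.univ).toReal +
    (μ.toJordanDecomposition.negPart Set.univ).toReal

private lemma myM_nonneg (μ : SignedMeasure (Ek k)) : 0 ≤ myM μ := by
  have := ENNReal.toReal_nonneg (a := μ.toJordanDecomposition.posPart Set.univ)
  have := ENNReal.toReal_nonneg (a := μ.toJordanDecomposition.negPart Set.univ)
  unfold myM; linarith

private lemma my_sInt_bound (μ : SignedMeasure (Ek k)) {φ : Ek k → ℝ} (hφ : Continuous φ)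
    {C : ℝ} (hC : 0 ≤ C) (hb : ∀ x, |φ x| ≤ C) : |sInt μ φ| ≤ C * myM μ := by
  have h1 := my_int_bound hφ hC hb μ.toJordanDecomposition.posPart
  have h2 := my_int_bound hφ hC hb μ.toJordanDecomposition.negPart
  rw [sInt]
  unfold myM
  calc |∫ x, φ x ∂μ.toJordanDecomposition.posPart - ∫ x, φ x ∂μ.toJordanDecomposition.negPart|
      ≤ |∫ x, φ x ∂μ.toJordanDecomposition.posPart| +
        |∫ x, φ x ∂μ.toJordanDecomposition.negPart| := abs_sub _ _
    _ ≤ _ := by rw [mul_add]; exact add_le_add h1 h2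

private lemma my_zero_cpt : HasCompactSupport (fun _ : Ek k => (0:ℝ)) := by
  rw [hasCompactSupport_def]
  simp [tsupport, Function.support]

private lemma my_sInt_zero (ν : SignedMeasure (Ek k)) : sInt ν (fun _ => (0:ℝ)) = 0 := by
  simp [sInt]

private lemma my_tv_elem_le (μ : SignedMeasure (Ek k)) (h : Ek k) {r : ℝ}
    (hr : r ∈ {r | ∃ φ : Ek k → ℝ, ContDiff ℝ (⊤ : ℕ∞) φ ∧ HasCompactSupport φ ∧
      (∀ x, |φ x| ≤ 1) ∧ r = sInt (shiftSM μ h - μ) φ}) : r ≤ 2 * myM μ := by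
  obtain ⟨φ, hφd, hφc, hb, rfl⟩ := hr
  have hcont : Continuous φ := hφd.continuous
  have hcont' : Continuous (fun x => φ (x + h)) := hcont.comp (continuous_id.add continuous_const)
  have hb' : ∀ x : Ek k, |φ (x + h)| ≤ 1 := fun x => hb _
  rw [my_sInt_sub _ _ hcont hb, my_sInt_shift _ _ hcont hb]
  have h1 := my_sInt_bound μ hcont' zero_le_one hb'
  have h2 := my_sInt_bound μ hcont zero_le_one hb
  rw [abs_le] at h1 h2
  simp only [one_mul] at h1 h2
  linarith [h1.2, h2.1]

private lemma my_tv_bddAbove (μ : SignedMeasure (Ek k)) (h : Ek k) :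
    BddAbove {r | ∃ φ : Ek k → ℝ, ContDiff ℝ (⊤ : ℕ∞) φ ∧ HasCompactSupport φ ∧
      (∀ x, |φ x| ≤ 1) ∧ r = sInt (shiftSM μ h - μ) φ} :=
  ⟨2 * myM μ, fun _ hr => my_tv_elem_le μ h hr⟩

private lemma my_abs_sInt_le_tv (μ : SignedMeasure (Ek k)) (h : Ek k) {g : Ek k → ℝ}
    (hgd : ContDiff ℝ (⊤ : ℕ∞) g) (hgc : HasCompactSupport g) (hb : ∀ x, |g x| ≤ 1) :
    |sInt (shiftSM μ h - μ) g| ≤ tvSM (shiftSM μ h - μ) := by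
  rw [abs_le]
  constructor
  · have hmem : -sInt (shiftSM μ h - μ) g ∈ {r | ∃ φ : Ek k → ℝ, ContDiff ℝ (⊤ : ℕ∞) φ ∧
        HasCompactSupport φ ∧ (∀ x, |φ x| ≤ 1) ∧ r = sInt (shiftSM μ h - μ) φ} := by
      refine ⟨fun x => -g x, hgd.neg, hgc.comp_left (g := fun y : ℝ => -y) neg_zero,
        fun x => by simpa using hb x, ?_⟩
      simp only [sInt, MeasureTheory.integral_neg]
      ring
    have := le_csSup (my_tv_bddAbove μ h) hmem
    rw [tvSM]; linarith
  · exact le_csSup (my_tv_bddAbove μ h) ⟨g, hgd, hgc, hb, rfl⟩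

private lemma my_tv_nonneg (μ : SignedMeasure (Ek k)) (h : Ek k) :
    0 ≤ tvSM (shiftSM μ h - μ) :=
  le_csSup (my_tv_bddAbove μ h)
    ⟨fun _ => 0, contDiff_const, my_zero_cpt, fun x => by simp, (my_sInt_zero _).symm⟩

private lemma my_tv_le (μ : SignedMeasure (Ek k)) (h : Ek k) :
    tvSM (shiftSM μ h - μ) ≤ 2 * myM μ :=
  Real.sSup_le (fun _ hr => my_tv_elem_le μ h hr) (by linarith [myM_nonneg μ])

end Stmt5Main
section Stmt5Key
open MeasureTheory intervalIntegral

variable {k : ℕ}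

private lemma my_ftc {φ : Ek k → ℝ} (hφ : ContDiff ℝ (⊤ : ℕ∞) φ) (e x : Ek k) (t : ℝ) :
    ∫ s in (0:ℝ)..t, (fderiv ℝ φ (x + s • e)) e = φ (x + t • e) - φ x := by
  have hd : ∀ s : ℝ, HasDerivAt (fun s : ℝ => φ (x + s • e)) ((fderiv ℝ φ (x + s • e)) e) s := by
    intro s
    have h1 : HasFDerivAt φ (fderiv ℝ φ (x + s • e)) (x + s • e) :=
      ((hφ.differentiable (by simp)) (x + s • e)).hasFDerivAt
    have h2 : HasDerivAt (fun s : ℝ => x + s • e) e s := by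
      simpa using ((hasDerivAt_id s).smul_const e).const_add x
    exact h1.comp_hasDerivAt s h2
  have hcont : Continuous (fun s : ℝ => (fderiv ℝ φ (x + s • e)) e) :=
    ((hφ.continuous_fderiv (by simp)).comp
      (continuous_const.add (continuous_id.smul continuous_const))).clm_apply continuous_const
  have := integral_eq_sub_of_hasDerivAt (f := fun s : ℝ => φ (x + s • e))
    (f' := fun s : ℝ => (fderiv ℝ φ (x + s • e)) e) (a := 0) (b := t)
    (fun s _ => hd s) (hcont.intervalIntegrable 0 t)
  simpa using this

private lemma my_fin_restrict (t : ℝ) :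
    IsFiniteMeasure (volume.restrict (Set.Ioc (0:ℝ) t)) := by
  constructor
  rw [Measure.restrict_apply_univ, Real.volume_Ioc]
  exact ENNReal.ofReal_lt_top

private lemma my_prod_integrable (m : Measure (Ek k)) [IsFiniteMeasure m]
    {g : Ek k → ℝ} (hg : Continuous g) (hb : ∀ x, |g x| ≤ 1) (e : Ek k) (t : ℝ) :
    Integrable (Function.uncurry fun (s : ℝ) (x : Ek k) => g (x + s • e))
      ((volume.restrict (Set.Ioc (0:ℝ) t)).prod m) := by
  haveI := my_fin_restrict t
  have hcont : Continuous (Function.uncurry fun (s : ℝ) (x : Ek k) => g (x + s • e)) :=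
    hg.comp (continuous_snd.add (continuous_fst.smul continuous_const))
  exact (integrable_const (1:ℝ)).mono' hcont.aestronglyMeasurable
    (Filter.Eventually.of_forall fun p => by
      simpa [Real.norm_eq_abs, Function.uncurry] using hb (p.2 + p.1 • e))

private lemma my_fubini (m : Measure (Ek k)) [IsFiniteMeasure m]
    {g : Ek k → ℝ} (hg : Continuous g) (hb : ∀ x, |g x| ≤ 1) (e : Ek k) {t : ℝ} (ht : 0 < t) :
    ∫ s in (0:ℝ)..t, ∫ x, g (x + s • e) ∂m = ∫ x, (∫ s in (0:ℝ)..t, g (x + s • e)) ∂m := by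
  have hI := my_prod_integrable m hg hb e t
  have hswap := integral_integral_swap hI
  rw [integral_of_le ht.le]
  rw [hswap]
  congr 1
  ext x
  rw [integral_of_le ht.le]

private lemma my_intervalIntegrable (m : Measure (Ek k)) [IsFiniteMeasure m]
    {g : Ek k → ℝ} (hg : Continuous g) (hb : ∀ x, |g x| ≤ 1) (e : Ek k) {t : ℝ} (ht : 0 < t) :
    IntervalIntegrable (fun s => ∫ x, g (x + s • e) ∂m) volume 0 t := by
  have hI := (my_prod_integrable m hg hb e t).integral_prod_left
  rw [intervalIntegrable_iff, Set.uIoc_of_le ht.le]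
  exact hI

end Stmt5Key
section Stmt5Final
open MeasureTheory intervalIntegral

variable {k : ℕ}

private lemma my_sInt_fun_sub (μ : SignedMeasure (Ek k)) {f g : Ek k → ℝ}
    (hf : Continuous f) {Cf : ℝ} (hbf : ∀ x, |f x| ≤ Cf)
    (hg : Continuous g) {Cg : ℝ} (hbg : ∀ x, |g x| ≤ Cg) :
    sInt μ (fun x => f x - g x) = sInt μ f - sInt μ g := by
  simp only [sInt]
  rw [integral_sub (my_integrable hf hbf _) (my_integrable hg hbg _),
    integral_sub (my_integrable hf hbf _) (my_integrable hg hbg _)]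
  ring

private lemma my_sInt_const_mul (μ : SignedMeasure (Ek k)) (c : ℝ) (f : Ek k → ℝ) :
    sInt μ (fun x => c * f x) = c * sInt μ f := by
  simp only [sInt, MeasureTheory.integral_const_mul]
  ring

private lemma my_key (μ : SignedMeasure (Ek k)) {t : ℝ} (ht : 0 < t)
    (S : ℝ) (hS : ∀ h : Ek k, ‖h‖ ≤ t → tvSM (shiftSM μ h - μ) ≤ S)
    {φ : Ek k → ℝ} {e : Ek k} (hφd : ContDiff ℝ (⊤ : ℕ∞) φ) (hφc : HasCompactSupport φ)
    (he : ‖e‖ = 1) (hbt : ∀ x, |φ x| ≤ t) (hb1 : ∀ x, |fderiv ℝ φ x e| ≤ 1) :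
    sInt μ (fun x => fderiv ℝ φ x e) ≤ 2 * S := by
  set ψ : Ek k → ℝ := fun x => fderiv ℝ φ x e with hψ
  have hψd : ContDiff ℝ (⊤ : ℕ∞) ψ :=
    (hφd.fderiv_right (by exact_mod_cast le_top)).clm_apply contDiff_const
  have hψc : HasCompactSupport ψ := hφc.fderiv_apply ℝ e
  have hψcont : Continuous ψ := hψd.continuous
  have hφcont : Continuous φ := hφd.continuous
  set P := μ.toJordanDecomposition.posPart with hP
  set N := μ.toJordanDecomposition.negPart with hN
  -- Step 1: Fubini + FTC
  have hA : (∫ s in (0:ℝ)..t, sInt μ (fun x => ψ (x + s • e)))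
      = sInt μ (fun x => φ (x + t • e) - φ x) := by
    have hdf : (fun s : ℝ => sInt μ (fun x => ψ (x + s • e)))
        = fun s : ℝ => (∫ x, ψ (x + s • e) ∂P) - ∫ x, ψ (x + s • e) ∂N := rfl
    rw [hdf, intervalIntegral.integral_sub
        (my_intervalIntegrable P hψcont hb1 e ht) (my_intervalIntegrable N hψcont hb1 e ht),
      my_fubini P hψcont hb1 e ht, my_fubini N hψcont hb1 e ht]
    have hptw : ∀ x : Ek k, (∫ s in (0:ℝ)..t, ψ (x + s • e)) = φ (x + t • e) - φ x :=
      fun x => my_ftc hφd e x t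
    simp only [hptw]
    rfl
  -- Step 2: pointwise decomposition
  have hsplit : ∀ s : ℝ, sInt μ (fun x => ψ (x + s • e))
      = sInt μ ψ + sInt (shiftSM μ (s • e) - μ) ψ := by
    intro s
    rw [my_sInt_sub _ _ hψcont hb1, my_sInt_shift _ _ hψcont hb1]
    ring
  have hDint : IntervalIntegrable (fun s => sInt μ (fun x => ψ (x + s • e))) volume 0 t := by
    have : (fun s : ℝ => sInt μ (fun x => ψ (x + s • e)))
        = fun s : ℝ => (∫ x, ψ (x + s • e) ∂P) - ∫ x, ψ (x + s • e) ∂N := rfl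
    rw [this]
    exact (my_intervalIntegrable P hψcont hb1 e ht).sub (my_intervalIntegrable N hψcont hb1 e ht)
  -- Step 3: key identity
  have hkey : t * sInt μ ψ = sInt μ (fun x => φ (x + t • e) - φ x)
      - ∫ s in (0:ℝ)..t, sInt (shiftSM μ (s • e) - μ) ψ := by
    have h2 : (∫ s in (0:ℝ)..t, sInt (shiftSM μ (s • e) - μ) ψ)
        = (∫ s in (0:ℝ)..t, sInt μ (fun x => ψ (x + s • e)))
          - ∫ s in (0:ℝ)..t, sInt μ ψ := by
      rw [← intervalIntegral.integral_sub hDint intervalIntegrable_const]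
      congr 1
      ext s
      rw [hsplit s]
      ring
    rw [h2, hA, intervalIntegral.integral_const]
    simp
  -- Step 4: bounds
  have hte : ‖t • e‖ ≤ t := by rw [norm_smul, he, mul_one, Real.norm_eq_abs, abs_of_pos ht]
  have hb_first : |sInt μ (fun x => φ (x + t • e) - φ x)| ≤ t * S := by
    have heq : sInt μ (fun x => φ (x + t • e) - φ x) = sInt (shiftSM μ (t • e) - μ) φ := by
      rw [my_sInt_sub _ _ hφcont hbt, my_sInt_shift _ _ hφcont hbt,
        my_sInt_fun_sub μ (f := fun x => φ (x + t • e)) (g := φ)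
          (by fun_prop) (fun x => hbt (x + t • e)) hφcont hbt]
    set g : Ek k → ℝ := fun x => t⁻¹ * φ x with hg
    have hgd : ContDiff ℝ (⊤ : ℕ∞) g := contDiff_const.mul hφd
    have hgc : HasCompactSupport g := hφc.comp_left (g := fun y : ℝ => t⁻¹ * y) (mul_zero _)
    have hbg : ∀ x, |g x| ≤ 1 := by
      intro x
      rw [hg]
      simp only
      rw [abs_mul, abs_of_pos (inv_pos.2 ht)]
      calc t⁻¹ * |φ x| ≤ t⁻¹ * t :=
            mul_le_mul_of_nonneg_left (hbt x) (inv_pos.2 ht).le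
        _ = 1 := inv_mul_cancel₀ ht.ne'
    have habs := my_abs_sInt_le_tv μ (t • e) hgd hgc hbg
    have hgint : sInt (shiftSM μ (t • e) - μ) g = t⁻¹ * sInt (shiftSM μ (t • e) - μ) φ :=
      my_sInt_const_mul _ _ _
    have htv := hS (t • e) hte
    rw [heq]
    have h5 : |sInt (shiftSM μ (t • e) - μ) φ| = t * |sInt (shiftSM μ (t • e) - μ) g| := by
      rw [hgint, abs_mul, abs_of_pos (inv_pos.2 ht)]
      field_simp
    rw [h5]
    calc t * |sInt (shiftSM μ (t • e) - μ) g| ≤ t * S := by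
          apply mul_le_mul_of_nonneg_left _ ht.le
          exact habs.trans htv
      _ = t * S := rfl
  have hb_second : |∫ s in (0:ℝ)..t, sInt (shiftSM μ (s • e) - μ) ψ| ≤ S * t := by
    have := intervalIntegral.norm_integral_le_of_norm_le_const
      (f := fun s => sInt (shiftSM μ (s • e) - μ) ψ) (C := S) (a := 0) (b := t) ?_
    · rw [Real.norm_eq_abs] at this
      simpa [abs_of_pos ht] using this
    · intro s hs
      rw [Set.uIoc_of_le ht.le] at hs
      have hse : ‖s • e‖ ≤ t := by
        rw [norm_smul, he, mul_one, Real.norm_eq_abs, abs_of_pos hs.1]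
        exact hs.2
      rw [Real.norm_eq_abs]
      exact (my_abs_sInt_le_tv μ (s • e) hψd hψc hb1).trans (hS (s • e) hse)
  -- conclude
  have hfinal : t * sInt μ ψ ≤ t * (2 * S) := by
    rw [hkey]
    have h6 := abs_le.1 hb_first
    have h7 := abs_le.1 hb_second
    linarith [h6.2, h7.1]
  exact le_of_mul_le_mul_left hfinal ht

end Stmt5Final
theorem stmt5 {k : ℕ} (μ : SignedMeasure (Ek k)) (t : ℝ) (ht : 0 < t) :
    sigmaSM μ t ≤ 6 * k * sSup {r | ∃ h : Ek k, ‖h‖ ≤ t ∧ r = tvSM (shiftSM μ h - μ)} := by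
  set Rset := {r | ∃ h : Ek k, ‖h‖ ≤ t ∧ r = tvSM (shiftSM μ h - μ)} with hR
  have hbddR : BddAbove Rset := ⟨2 * myM μ, by rintro r ⟨h, _, rfl⟩; exact my_tv_le μ h⟩
  have hS0 : 0 ≤ sSup Rset :=
    le_trans (my_tv_nonneg μ 0) (le_csSup hbddR ⟨0, by simpa using ht.le, rfl⟩)
  have hS : ∀ h : Ek k, ‖h‖ ≤ t → tvSM (shiftSM μ h - μ) ≤ sSup Rset :=
    fun h hh => le_csSup hbddR ⟨h, hh, rfl⟩
  have h6k : (0:ℝ) ≤ 6 * k := by positivity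
  rw [sigmaSM]
  apply Real.sSup_le
  · rintro r ⟨φ, e, hφd, hφc, he, hbt, hb1, rfl⟩
    have hk : 1 ≤ (k:ℝ) := by
      rcases Nat.eq_zero_or_pos k with hk0 | hk0
      · exfalso
        subst hk0
        rw [EuclideanSpace.norm_eq] at he
        simpa using he
      · exact_mod_cast hk0
    have h2 := my_key μ ht (sSup Rset) hS hφd hφc he hbt hb1
    calc sInt μ (fun x => fderiv ℝ φ x e) ≤ 2 * sSup Rset := h2
      _ ≤ 6 * k * sSup Rset := by nlinarith
  · exact mul_nonneg h6k hS0
end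
end

section
/- Let f = (f₁,…,f_k) : ℝ^n → ℝ^k be smooth, M_f the Malliavin matrix with entries ⟨∇f_i,∇f_j⟩ and Δ_f = det M_f. Then for each j, the directional derivative of Δ_f along ∇f_j satisfies the pointwise bound |⟨∇f_j, ∇Δ_f⟩| ≤ 2 (Σ_m |∇f_m|)^{2k} Σ_i ‖D²f_i‖_{HS}, where ‖·‖_{HS} is the Hilbert–Schmidt norm of the Hessian matrices D²f_i. -/
open MeasureTheory Real
noncomputable section

lemma hadamard {k : ℕ} (v : Fin k → Ek k) :
    |Matrix.det (Matrix.of fun i j => v i j)| ≤ ∏ i, ‖v i‖ := by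
  haveI : Fact (Module.finrank ℝ (Ek k) = k) := ⟨finrank_euclideanSpace_fin⟩
  let b : OrthonormalBasis (Fin k) ℝ (Ek k) := EuclideanSpace.basisFun (Fin k) ℝ
  let o : Orientation ℝ (Ek k) (Fin k) := b.toBasis.orientation
  have h1 := o.abs_volumeForm_apply_le v
  have h2 := o.volumeForm_robust' b v
  rw [h2, Module.Basis.det_apply] at h1
  have h3 : b.toBasis.toMatrix v = Matrix.transpose (Matrix.of fun i j => v i j) := by
    ext i j
    simp [Module.Basis.toMatrix, b, Matrix.transpose]
  rw [h3, Matrix.det_transpose] at h1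
  exact h1

def detML (k : ℕ) : MultilinearMap ℝ (fun _ : Fin k => Ek k) ℝ :=
  (Matrix.detRowAlternating :
      AlternatingMap ℝ (Fin k → ℝ) ℝ (Fin k)).toMultilinearMap.compLinearMap
    (fun _ => (WithLp.linearEquiv 2 ℝ (∀ _ : Fin k, ℝ)).toLinearMap)

def detCML (k : ℕ) : ContinuousMultilinearMap ℝ (fun _ : Fin k => Ek k) ℝ :=
  (detML k).mkContinuous 1 (fun v => by
    rw [one_mul]
    calc ‖detML k v‖ = |Matrix.det (Matrix.of fun i j => v i j)| := rfl
    _ ≤ ∏ i, ‖v i‖ := hadamard v)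

lemma detCML_apply {k : ℕ} (v : Fin k → Ek k) :
    detCML k v = Matrix.det (Matrix.of fun i j => v i j) := rfl

lemma abs_detCML_le {k : ℕ} (v : Fin k → Ek k) : |detCML k v| ≤ ∏ i, ‖v i‖ :=
  (detCML_apply v ▸ hadamard v)

lemma hsN_nonneg {n : ℕ} (A : Ek n →L[ℝ] Ek n) : 0 ≤ hsN A := Real.sqrt_nonneg _

lemma euclid_decomp {k : ℕ} (w : Ek k) : w = ∑ a, (w a) • EuclideanSpace.single a (1:ℝ) := by
  ext b
  rw [show (∑ a, (w a) • EuclideanSpace.single a (1:ℝ)) b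
      = ∑ a, ((w a) • EuclideanSpace.single a (1:ℝ)) b from by rw [WithLp.ofLp_sum]; exact Finset.sum_apply b _ _]
  simp [EuclideanSpace.single_apply]

lemma norm_le_sum_abs {k : ℕ} (w : Ek k) : ‖w‖ ≤ ∑ a, |w a| := by
  calc ‖w‖ = ‖∑ a, (w a) • EuclideanSpace.single a (1:ℝ)‖ := by rw [← euclid_decomp w]
  _ ≤ ∑ a, ‖(w a) • EuclideanSpace.single a (1:ℝ)‖ := norm_sum_le _ _
  _ = ∑ a, |w a| := by simp [norm_smul, EuclideanSpace.norm_single]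

lemma abs_inner_le_hsN {n : ℕ} (A : Ek n →L[ℝ] Ek n) (u w : Ek n) :
    |(inner ℝ (A u) w : ℝ)| ≤ hsN A * ‖u‖ * ‖w‖ := by
  set M := fun i j => (inner ℝ (A (EuclideanSpace.single i 1)) (EuclideanSpace.single j 1) : ℝ) with hM
  have hexp : (inner ℝ (A u) w : ℝ) = ∑ i, ∑ j, M i j * (u i * w j) := by
    conv_lhs => rw [euclid_decomp u, map_sum]
    rw [sum_inner]
    refine Finset.sum_congr rfl fun i _ => ?_
    rw [A.map_smul, real_inner_smul_left]
    conv_lhs => rw [euclid_decomp w, inner_sum]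
    rw [Finset.mul_sum]
    refine Finset.sum_congr rfl fun b _ => ?_
    rw [real_inner_smul_right]
    ring
  have key := Finset.sum_mul_sq_le_sq_mul_sq Finset.univ
    (fun p : Fin n × Fin n => M p.1 p.2) (fun p => u p.1 * w p.2)
  have h2 : (inner ℝ (A u) w : ℝ) = ∑ p : Fin n × Fin n, M p.1 p.2 * (u p.1 * w p.2) := by
    rw [hexp, Fintype.sum_prod_type]
  have h3 : |(inner ℝ (A u) w : ℝ)| ≤
      Real.sqrt (∑ p : Fin n × Fin n, M p.1 p.2 ^ 2) *
      Real.sqrt (∑ p : Fin n × Fin n, (u p.1 * w p.2) ^ 2) := by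
    rw [h2, ← Real.sqrt_sq_eq_abs, ← Real.sqrt_mul (by positivity)]
    exact Real.sqrt_le_sqrt key
  refine h3.trans (le_of_eq ?_)
  have e1 : Real.sqrt (∑ p : Fin n × Fin n, M p.1 p.2 ^ 2) = hsN A := by
    rw [hsN, Fintype.sum_prod_type]
  have e2 : Real.sqrt (∑ p : Fin n × Fin n, (u p.1 * w p.2) ^ 2) = ‖u‖ * ‖w‖ := by
    rw [Fintype.sum_prod_type]
    have : ∑ i, ∑ j, (u i * w j)^2 = (∑ i, u i ^ 2) * (∑ j, w j ^ 2) := by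
      rw [Finset.sum_mul_sum]
      exact Finset.sum_congr rfl fun i _ => Finset.sum_congr rfl fun j _ => by ring
    rw [this, Real.sqrt_mul (by positivity), EuclideanSpace.norm_eq, EuclideanSpace.norm_eq]
    norm_num
  rw [e1, e2, mul_assoc]

theorem stmt15 {n k : ℕ} (f : Ek n → Ek k) (hf : ContDiff ℝ (⊤ : ℕ∞) f)
    (j : Fin k) (x : Ek n) :
    |(inner ℝ (gradient (fun y => f y j) x) (gradient (fun y => malDet f y) x) : ℝ)| ≤
      2 * (∑ m, ‖gradient (fun y => f y m) x‖) ^ (2 * k) *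
        ∑ i, hsN (hess (fun y => f y i) x) := by
  classical
  set g : Fin k → Ek n → Ek n := fun i => gradient (fun y => f y i) with hgdef
  have hfi : ∀ i : Fin k, ContDiff ℝ (⊤:ℕ∞) (fun y => f y i) :=
    fun i => ((EuclideanSpace.proj i : Ek k →L[ℝ] ℝ).contDiff).comp hf
  have hgi : ∀ i, ContDiff ℝ (⊤:ℕ∞) (g i) := by
    intro i
    have h1 : ContDiff ℝ (⊤:ℕ∞) (fderiv ℝ (fun y => f y i)) := (hfi i).fderiv_right (by exact_mod_cast le_top)
    exact ((InnerProductSpace.toDual ℝ (Ek n)).symm.contDiff).comp h1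
  have hgd : ∀ i (y : Ek n), DifferentiableAt ℝ (g i) y :=
    fun i y => ((hgi i).differentiable (by simp)) y
  -- the rows map
  set G : Ek n → (Fin k → Ek k) := fun y c =>
    (WithLp.equiv 2 (∀ _ : Fin k, ℝ)).symm (fun a => (inner ℝ (g c y) (g a y) : ℝ)) with hGdef
  -- entry derivatives
  set E' : Fin k → Fin k → (Ek n →L[ℝ] ℝ) :=
    fun c a => fderiv ℝ (fun y => (inner ℝ (g c y) (g a y) : ℝ)) x with hE'def
  have hed : ∀ c a : Fin k, DifferentiableAt ℝ (fun y => (inner ℝ (g c y) (g a y) : ℝ)) x :=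
    fun c a => (hgd c x).inner ℝ (hgd a x)
  set D : Ek n →L[ℝ] (Fin k → Ek k) := ContinuousLinearMap.pi (fun c =>
    ((PiLp.continuousLinearEquiv 2 ℝ (fun _ : Fin k => ℝ)).symm :
        (∀ _ : Fin k, ℝ) →L[ℝ] Ek k).comp
      (ContinuousLinearMap.pi (fun a => E' c a))) with hDdef
  have hG : HasFDerivAt G D x := by
    rw [hDdef]
    apply hasFDerivAt_pi''
    intro c
    rw [ContinuousLinearMap.proj_pi]
    exact (((PiLp.continuousLinearEquiv 2 ℝ (fun _ : Fin k => ℝ)).symm :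
        (∀ _ : Fin k, ℝ) →L[ℝ] Ek k).hasFDerivAt).comp x
      (hasFDerivAt_pi.2 (fun a => (hed c a).hasFDerivAt))
  have hMal : ∀ y, malDet f y = detCML k (G y) := fun y => rfl
  have hDet : HasFDerivAt (fun y => malDet f y)
      (((detCML k).linearDeriv (G x)).comp D) x := by
    have := ((detCML k).hasFDerivAt (x := G x)).comp x hG
    exact this
  set L := ((detCML k).linearDeriv (G x)).comp D with hL
  have hfd : fderiv ℝ (fun y => malDet f y) x = L := hDet.fderiv
  set v : Ek n := g j x with hv
  have hLHS : (inner ℝ (g j x) (gradient (fun y => malDet f y) x) : ℝ) = L v := by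
    rw [real_inner_comm]
    rw [show gradient (fun y => malDet f y) x
        = (InnerProductSpace.toDual ℝ (Ek n)).symm (fderiv ℝ (fun y => malDet f y) x) from rfl]
    rw [InnerProductSpace.toDual_symm_apply, hfd]
  have hLv : L v = ∑ c, detCML k (Function.update (G x) c (D v c)) := by
    rw [hL, ContinuousLinearMap.comp_apply, ContinuousMultilinearMap.linearDeriv_apply]
  have hDvc : ∀ c a, (D v c) a = E' c a v := fun c a => rfl
  have hEntry : ∀ c a : Fin k, E' c a v =
      (inner ℝ (g c x) (hess (fun y => f y a) x v) : ℝ) +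
      (inner ℝ (hess (fun y => f y c) x v) (g a x) : ℝ) := by
    intro c a
    rw [hE'def]
    exact fderiv_inner_apply ℝ (hgd c x) (hgd a x) v
  set S : ℝ := ∑ m, ‖g m x‖ with hS
  set H : ℝ := ∑ i, hsN (hess (fun y => f y i) x) with hH
  have hS0 : 0 ≤ S := Finset.sum_nonneg fun _ _ => norm_nonneg _
  have hH0 : 0 ≤ H := Finset.sum_nonneg fun _ _ => Real.sqrt_nonneg _
  have hgS : ∀ i, ‖g i x‖ ≤ S :=
    fun i => Finset.single_le_sum (fun m _ => norm_nonneg (g m x)) (Finset.mem_univ i)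
  have hvS : ‖v‖ ≤ S := hgS j
  have hGrow : ∀ r, ‖G x r‖ ≤ ‖g r x‖ * S := by
    intro r
    refine (norm_le_sum_abs (G x r)).trans ?_
    rw [Finset.mul_sum]
    refine Finset.sum_le_sum fun a _ => ?_
    exact (abs_real_inner_le_norm (g r x) (g a x))
  have hGrowS : ∀ r, ‖G x r‖ ≤ S * S :=
    fun r => (hGrow r).trans (mul_le_mul_of_nonneg_right (hgS r) hS0)
  have hDb : ∀ c, ‖D v c‖ ≤
      ‖v‖ * (‖g c x‖ * H + S * hsN (hess (fun y => f y c) x)) := by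
    intro c
    refine (norm_le_sum_abs (D v c)).trans ?_
    have hterm : ∀ a : Fin k, |(D v c) a| ≤
        hsN (hess (fun y => f y a) x) * ‖v‖ * ‖g c x‖ +
        hsN (hess (fun y => f y c) x) * ‖v‖ * ‖g a x‖ := by
      intro a
      rw [hDvc c a, hEntry c a]
      refine (abs_add_le _ _).trans (add_le_add ?_ ?_)
      · rw [real_inner_comm]
        exact abs_inner_le_hsN _ v (g c x)
      · exact abs_inner_le_hsN _ v (g a x)
    refine (Finset.sum_le_sum fun a _ => hterm a).trans (le_of_eq ?_)
    calc ∑ a, (hsN (hess (fun y => f y a) x) * ‖v‖ * ‖g c x‖ +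
          hsN (hess (fun y => f y c) x) * ‖v‖ * ‖g a x‖)
        = (‖v‖ * ‖g c x‖) * H + (hsN (hess (fun y => f y c) x) * ‖v‖) * S := by
          rw [Finset.sum_add_distrib, hH, hS, Finset.mul_sum, Finset.mul_sum]
          congr 1 <;> exact Finset.sum_congr rfl fun a _ => by ring
      _ = ‖v‖ * (‖g c x‖ * H + S * hsN (hess (fun y => f y c) x)) := by ring
  obtain ⟨m, rfl⟩ : ∃ m, k = m + 1 := ⟨k - 1, (Nat.succ_pred_eq_of_pos j.pos).symm⟩
  have hterm_bound : ∀ c : Fin (m+1),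
      |detCML (m+1) (Function.update (G x) c (D v c))| ≤
      (‖v‖ * (‖g c x‖ * H + S * hsN (hess (fun y => f y c) x))) * (S * S) ^ m := by
    intro c
    refine (abs_detCML_le _).trans ?_
    have hprod : ∏ r, ‖Function.update (G x) c (D v c) r‖ =
        ‖D v c‖ * ∏ r ∈ Finset.univ.erase c, ‖G x r‖ := by
      rw [← Finset.mul_prod_erase Finset.univ _ (Finset.mem_univ c),
        Function.update_self]
      congr 1
      exact Finset.prod_congr rfl fun r hr =>
        by rw [Function.update_of_ne (Finset.ne_of_mem_erase hr)]
    rw [hprod]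
    have hP : ∏ r ∈ Finset.univ.erase c, ‖G x r‖ ≤ (S * S) ^ m := by
      have hcard : (Finset.univ.erase c).card = m := by
        rw [Finset.card_erase_of_mem (Finset.mem_univ c), Finset.card_univ,
          Fintype.card_fin]
        rfl
      calc ∏ r ∈ Finset.univ.erase c, ‖G x r‖
          ≤ ∏ _r ∈ Finset.univ.erase c, (S * S) :=
            Finset.prod_le_prod (fun r _ => norm_nonneg _) (fun r _ => hGrowS r)
        _ = (S * S) ^ m := by rw [Finset.prod_const, hcard]
    exact mul_le_mul (hDb c) hP
      (Finset.prod_nonneg fun r _ => norm_nonneg _)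
      (mul_nonneg (norm_nonneg _)
        (add_nonneg (mul_nonneg (norm_nonneg _) hH0) (mul_nonneg hS0 (hsN_nonneg _))))
  rw [hLHS, hLv]
  refine (Finset.abs_sum_le_sum_abs _ _).trans ?_
  refine (Finset.sum_le_sum fun c _ => hterm_bound c).trans ?_
  have hsum : ∑ c : Fin (m+1),
      (‖v‖ * (‖g c x‖ * H + S * hsN (hess (fun y => f y c) x))) * (S * S) ^ m
      = ‖v‖ * (S * H + S * H) * (S * S) ^ m := by
    have hc : ∀ c : Fin (m+1),
        (‖v‖ * (‖g c x‖ * H + S * hsN (hess (fun y => f y c) x))) * (S * S) ^ m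
        = (‖v‖ * H * (S * S) ^ m) * ‖g c x‖ +
          (‖v‖ * S * (S * S) ^ m) * hsN (hess (fun y => f y c) x) := fun c => by ring
    rw [Finset.sum_congr rfl fun c _ => hc c, Finset.sum_add_distrib,
      ← Finset.mul_sum, ← Finset.mul_sum, ← hS, ← hH]
    ring
  rw [hsum]
  have h2 : ‖v‖ * (S * H + S * H) * (S * S) ^ m ≤ S * (S * H + S * H) * (S * S) ^ m := by
    have : (0:ℝ) ≤ (S * H + S * H) * (S * S) ^ m := by positivity
    calc ‖v‖ * (S * H + S * H) * (S * S) ^ m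
        = ‖v‖ * ((S * H + S * H) * (S * S) ^ m) := by ring
      _ ≤ S * ((S * H + S * H) * (S * S) ^ m) := mul_le_mul_of_nonneg_right hvS this
      _ = S * (S * H + S * H) * (S * S) ^ m := by ring
  refine h2.trans (le_of_eq ?_)
  rw [show 2 * (m + 1) = (2 * m) + 2 by ring, pow_add, pow_mul]
  ring
end
end
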